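/- Let (g, J, ω) be a Kähler Lie algebra with associated metric g(x,y) = ω(Jx,y) and Levi-Civita connection ∇, and let h be an ω-lagrangian ideal of g with h ∩ J(h) = 0. Then for all x, y ∈ h: ∇_x y ∈ J(h), ∇_{Jx}(Jy) ∈ J(h), ∇_x(Jy) ∈ h, and ∇_{Jx} y ∈ h. In particular the subalgebra J(h) is totally geodesic: ∇_u v ∈ J(h) for all u, v ∈ J(h). -/

import Mathlib

section KahlerDefs

variable {L : Type*} [LieRing L] [LieAlgebra ℝ L]

def IsComplexStructure (J : Module.End ℝ L) : Prop :=
  (∀ x, J (J x) = -x) ∧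
  ∀ x y : L, ⁅J x, J y⁆ - ⁅x, y⁆ - J ⁅J x, y⁆ - J ⁅x, J y⁆ = 0

def IsSymplecticForm (ω : L →ₗ[ℝ] L →ₗ[ℝ] ℝ) : Prop :=
  (∀ x, ω x x = 0) ∧
  (∀ x, (∀ y, ω x y = 0) → x = 0) ∧
  ∀ x y z : L, ω ⁅x, y⁆ z + ω ⁅y, z⁆ x + ω ⁅z, x⁆ y = 0

def IsKahlerStructure (J : Module.End ℝ L) (ω : L →ₗ[ℝ] L →ₗ[ℝ] ℝ) : Prop :=
  IsComplexStructure J ∧ IsSymplecticForm ω ∧ ∀ x y : L, ω (J x) (J y) = ω x y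

def IsLeviCivita (J : Module.End ℝ L) (ω : L →ₗ[ℝ] L →ₗ[ℝ] ℝ)
    (D : L →ₗ[ℝ] L →ₗ[ℝ] L) : Prop :=
  ∀ x y z : L,
    2 * ω (J (D x y)) z = ω (J ⁅x, y⁆) z - ω (J ⁅y, z⁆) x + ω (J ⁅z, x⁆) y

noncomputable def ricci (D : L →ₗ[ℝ] L →ₗ[ℝ] L) (x y : L) : ℝ :=
  - LinearMap.trace ℝ L
      ((D x) ∘ₗ (D.flip y) - D.flip (D x y) - (D.flip y) ∘ₗ (LieAlgebra.ad ℝ L x))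

def IsFlat (D : L →ₗ[ℝ] L →ₗ[ℝ] L) : Prop :=
  ∀ x y z : L, D x (D y z) - D y (D x z) - D ⁅x, y⁆ z = 0

end KahlerDefs

section Models

variable (M : Type*) [LieRing M] [LieAlgebra ℝ M]

def IsRxH3 : Prop :=
  ∃ b : Module.Basis (Fin 4) ℝ M,
    ⁅b 0, b 1⁆ = b 2 ∧ ⁅b 0, b 2⁆ = 0 ∧ ⁅b 0, b 3⁆ = 0 ∧
    ⁅b 1, b 2⁆ = 0 ∧ ⁅b 1, b 3⁆ = 0 ∧ ⁅b 2, b 3⁆ = 0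

def IsR2xAffR : Prop :=
  ∃ b : Module.Basis (Fin 4) ℝ M,
    ⁅b 0, b 1⁆ = b 1 ∧ ⁅b 0, b 2⁆ = 0 ∧ ⁅b 0, b 3⁆ = 0 ∧
    ⁅b 1, b 2⁆ = 0 ∧ ⁅b 1, b 3⁆ = 0 ∧ ⁅b 2, b 3⁆ = 0

def IsRxE2 : Prop :=
  ∃ b : Module.Basis (Fin 4) ℝ M,
    ⁅b 0, b 1⁆ = -b 2 ∧ ⁅b 0, b 2⁆ = b 1 ∧ ⁅b 0, b 3⁆ = 0 ∧
    ⁅b 1, b 2⁆ = 0 ∧ ⁅b 1, b 3⁆ = 0 ∧ ⁅b 2, b 3⁆ = 0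

def IsAffRxAffR : Prop :=
  ∃ b : Module.Basis (Fin 4) ℝ M,
    ⁅b 0, b 1⁆ = b 1 ∧ ⁅b 0, b 2⁆ = 0 ∧ ⁅b 0, b 3⁆ = 0 ∧
    ⁅b 1, b 2⁆ = 0 ∧ ⁅b 1, b 3⁆ = 0 ∧ ⁅b 2, b 3⁆ = b 3

def IsAffC : Prop :=
  ∃ b : Module.Basis (Fin 4) ℝ M,
    ⁅b 0, b 1⁆ = 0 ∧ ⁅b 0, b 2⁆ = b 2 ∧ ⁅b 0, b 3⁆ = b 3 ∧
    ⁅b 1, b 2⁆ = b 3 ∧ ⁅b 1, b 3⁆ = -b 2 ∧ ⁅b 2, b 3⁆ = 0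

def IsR4m1m1 : Prop :=
  ∃ b : Module.Basis (Fin 4) ℝ M,
    ⁅b 3, b 0⁆ = b 0 ∧ ⁅b 3, b 1⁆ = -b 1 ∧ ⁅b 3, b 2⁆ = -b 2 ∧
    ⁅b 0, b 1⁆ = 0 ∧ ⁅b 0, b 2⁆ = 0 ∧ ⁅b 1, b 2⁆ = 0

def IsR4'0 (δ : ℝ) : Prop :=
  ∃ b : Module.Basis (Fin 4) ℝ M,
    ⁅b 3, b 0⁆ = b 0 ∧ ⁅b 3, b 1⁆ = -(δ • b 2) ∧ ⁅b 3, b 2⁆ = δ • b 1 ∧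
    ⁅b 0, b 1⁆ = 0 ∧ ⁅b 0, b 2⁆ = 0 ∧ ⁅b 1, b 2⁆ = 0

def IsD4 (lam : ℝ) : Prop :=
  ∃ b : Module.Basis (Fin 4) ℝ M,
    ⁅b 0, b 1⁆ = b 2 ∧ ⁅b 3, b 0⁆ = lam • b 0 ∧ ⁅b 3, b 1⁆ = (1 - lam) • b 1 ∧
    ⁅b 3, b 2⁆ = b 2 ∧ ⁅b 0, b 2⁆ = 0 ∧ ⁅b 1, b 2⁆ = 0

def IsD4' (δ : ℝ) : Prop :=
  ∃ b : Module.Basis (Fin 4) ℝ M,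
    ⁅b 0, b 1⁆ = b 2 ∧ ⁅b 3, b 0⁆ = (δ / 2) • b 0 - b 1 ∧
    ⁅b 3, b 1⁆ = b 0 + (δ / 2) • b 1 ∧ ⁅b 3, b 2⁆ = δ • b 2 ∧
    ⁅b 0, b 2⁆ = 0 ∧ ⁅b 1, b 2⁆ = 0

end Models

/-- For a Kähler Lie algebra with ω-lagrangian ideal h satisfying h ∩ J(h) = 0,
the Levi-Civita connection maps h×h to J(h), J(h)×J(h) to J(h), h×J(h) and J(h)×h to h;
in particular J(h) is totally geodesic. -/
theorem lagrangian_ideal_totally_geodesic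
    {L : Type*} [LieRing L] [LieAlgebra ℝ L] [Module.Finite ℝ L]
    (J : Module.End ℝ L) (ω : L →ₗ[ℝ] L →ₗ[ℝ] ℝ)
    (hK : IsKahlerStructure J ω)
    (D : L →ₗ[ℝ] L →ₗ[ℝ] L) (hD : IsLeviCivita J ω D)
    (h : Submodule ℝ L) (hideal : ∀ x : L, ∀ y ∈ h, ⁅x, y⁆ ∈ h)
    (hiso : ∀ x ∈ h, ∀ y ∈ h, ω x y = 0)
    (hlag : ∀ y : L, (∀ x ∈ h, ω x y = 0) → y ∈ h)
    (hint : h ⊓ Submodule.map J h = ⊥) :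
    (∀ x ∈ h, ∀ y ∈ h,
      D x y ∈ Submodule.map J h ∧ D (J x) (J y) ∈ Submodule.map J h ∧
      D x (J y) ∈ h ∧ D (J x) y ∈ h) ∧
    (∀ u ∈ Submodule.map J h, ∀ v ∈ Submodule.map J h, D u v ∈ Submodule.map J h) := by
  obtain ⟨⟨hJ2, hNij⟩, ⟨hAlt, hNondeg, hCoc⟩, hCompat⟩ := hK
  have skew : ∀ x y : L, ω y x = - ω x y := by
    intro x y
    have h0 := hAlt (x + y)
    simp only [map_add, LinearMap.add_apply, hAlt] at h0
    linarith
  have hBr : ∀ x : L, ∀ y ∈ h, ⁅y, x⁆ ∈ h := by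
    intro x y hy
    have he : (⁅y, x⁆ : L) = -⁅x, y⁆ := by rw [← lie_skew]
    rw [he]
    exact h.neg_mem (hideal x y hy)
  have memcrit : ∀ w : L, (∀ z ∈ h, ω w z = 0) → w ∈ h := by
    intro w hw
    exact hlag w (fun z hz => by rw [skew w z, hw z hz, neg_zero])
  have hωJ : ∀ p q : L, ω (J p) q = - ω p (J q) := by
    intro p q
    have h1 := hCompat p (J q)
    rw [hJ2] at h1
    simp only [map_neg] at h1
    linarith
  have G0 : ∀ a ∈ h, ∀ b ∈ h, ∀ c ∈ h, ω (J ⁅a, b⁆) c = 0 := by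
    intro a ha b hb c hc
    have h1 := hωJ ⁅a, b⁆ c
    have h2 := hCoc a b (J c)
    have h3 : ω ⁅b, J c⁆ a = 0 := hiso _ (hBr (J c) b hb) a ha
    have h4 : ω ⁅J c, a⁆ b = 0 := hiso _ (hideal (J c) a ha) b hb
    linarith
  have hNij' : ∀ p q : L, J ⁅J p, J q⁆ = J ⁅p, q⁆ - ⁅J p, q⁆ - ⁅p, J q⁆ := by
    intro p q
    have h1 := hNij p q
    rw [sub_sub, sub_sub, sub_eq_zero] at h1
    rw [h1, map_add, map_add, hJ2, hJ2]
    abel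
  have toJh : ∀ w : L, J w ∈ h → w ∈ Submodule.map J h := by
    intro w hw
    exact ⟨-(J w), h.neg_mem hw, by rw [map_neg, hJ2, neg_neg]⟩
  have c1 : ∀ x ∈ h, ∀ y ∈ h, D x y ∈ Submodule.map J h := by
    intro x hx y hy
    refine toJh _ (memcrit _ (fun z hz => ?_))
    have hk := hD x y z
    have t1 := G0 x hx y hy z hz
    have t2 := G0 y hy z hz x hx
    have t3 := G0 z hz x hx y hy
    linarith
  have c2 : ∀ x ∈ h, ∀ y ∈ h, D (J x) (J y) ∈ Submodule.map J h := by
    intro x hx y hy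
    refine toJh _ (memcrit _ (fun z hz => ?_))
    have hk := hD (J x) (J y) z
    have e1 : ω (J ⁅J x, J y⁆) z = 0 := by
      rw [hNij' x y]
      simp only [map_sub, LinearMap.sub_apply]
      rw [G0 x hx y hy z hz, hiso _ (hideal (J x) y hy) z hz,
          hiso _ (hBr (J y) x hx) z hz]
      ring
    have e2 : ω (J ⁅J y, z⁆) (J x) = 0 := by
      rw [hCompat]; exact hiso _ (hideal (J y) z hz) x hx
    have e3 : ω (J ⁅z, J x⁆) (J y) = 0 := by
      rw [hCompat]; exact hiso _ (hBr (J x) z hz) y hy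
    linarith
  have c3 : ∀ x ∈ h, ∀ y ∈ h, D x (J y) ∈ h := by
    intro x hx y hy
    refine memcrit _ (fun z hz => ?_)
    have hk := hD x (J y) (J z)
    have e1 : ω (J ⁅x, J y⁆) (J z) = 0 := by
      rw [hCompat]; exact hiso _ (hBr (J y) x hx) z hz
    have e2 : ω (J ⁅J y, J z⁆) x = 0 := by
      rw [hNij' y z]
      simp only [map_sub, LinearMap.sub_apply]
      rw [G0 y hy z hz x hx, hiso _ (hideal (J y) z hz) x hx,
          hiso _ (hBr (J z) y hy) x hx]
      ring
    have e3 : ω (J ⁅J z, x⁆) (J y) = 0 := by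
      rw [hCompat]; exact hiso _ (hideal (J z) x hx) y hy
    have e4 : ω (J (D x (J y))) (J z) = ω (D x (J y)) z := hCompat _ _
    linarith
  have c4 : ∀ x ∈ h, ∀ y ∈ h, D (J x) y ∈ h := by
    intro x hx y hy
    refine memcrit _ (fun z hz => ?_)
    have hk := hD (J x) y (J z)
    have e1 : ω (J ⁅J x, y⁆) (J z) = 0 := by
      rw [hCompat]; exact hiso _ (hideal (J x) y hy) z hz
    have e2 : ω (J ⁅y, J z⁆) (J x) = 0 := by
      rw [hCompat]; exact hiso _ (hBr (J z) y hy) x hx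
    have e3 : ω (J ⁅J z, J x⁆) y = 0 := by
      rw [hNij' z x]
      simp only [map_sub, LinearMap.sub_apply]
      rw [G0 z hz x hx y hy, hiso _ (hideal (J z) x hx) y hy,
          hiso _ (hBr (J x) z hz) y hy]
      ring
    have e4 : ω (J (D (J x) y)) (J z) = ω (D (J x) y) z := hCompat _ _
    linarith
  refine ⟨fun x hx y hy => ⟨c1 x hx y hy, c2 x hx y hy, c3 x hx y hy, c4 x hx y hy⟩, ?_⟩
  rintro u hu v hv
  obtain ⟨a, ha, rfl⟩ := hu
  obtain ⟨b, hb, rfl⟩ := hv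
  exact c2 a ha b hb
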